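/- If γ is an elementary cycle of a finite connected graph Γ, then the projections {π(e_j) : j ∈ γ⁰} span a codimension-one subspace of H = H_1(Γ,ℝ), namely the orthogonal complement γ^⊥ of γ in H. -/

import Mathlib

open scoped RealInnerProductSpace
open Classical

structure Digraph' (V E : Type) where
  s : E → V
  t : E → V

namespace Digraph'

variable {V E : Type} [Fintype V] [Fintype E] [DecidableEq V] [DecidableEq E]

/-- boundary map ∂ : C₁ → C₀, ∂e = source e − target e -/
noncomputable def bd (G : Digraph' V E) :
    EuclideanSpace ℝ E →ₗ[ℝ] EuclideanSpace ℝ V :=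
  Matrix.toEuclideanLin (Matrix.of fun v e =>
    (if G.s e = v then (1:ℝ) else 0) - (if G.t e = v then (1:ℝ) else 0))

/-- coboundary map δ : C₀ → C₁ -/
noncomputable def cobd (G : Digraph' V E) :
    EuclideanSpace ℝ V →ₗ[ℝ] EuclideanSpace ℝ E :=
  Matrix.toEuclideanLin (Matrix.of fun e v =>
    (if G.s e = v then (1:ℝ) else 0) - (if G.t e = v then (1:ℝ) else 0))

/-- orthogonal projection onto H₁(Γ,ℝ) = ker ∂, valued in the ambient space -/
noncomputable def proj (G : Digraph' V E) (x : EuclideanSpace ℝ E) : EuclideanSpace ℝ E :=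
  (Submodule.orthogonalProjection (LinearMap.ker (bd G)) x : EuclideanSpace ℝ E)

/-- reachability using only edges in S (edges traversable both ways) -/
def Reach (G : Digraph' V E) (S : Set E) : V → V → Prop :=
  Relation.ReflTransGen (fun a b => ∃ e ∈ S, (G.s e = a ∧ G.t e = b) ∨ (G.s e = b ∧ G.t e = a))

def Connected (G : Digraph' V E) : Prop := ∀ a b : V, Reach G Set.univ a b

/-- an edge is a bridge if its removal disconnects the graph -/
def IsBridge (G : Digraph' V E) (e : E) : Prop := ¬ ∀ a b : V, Reach G {e}ᶜ a b

def Bridgeless (G : Digraph' V E) : Prop := ∀ e : E, ¬ IsBridge G e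

/-- directed reachability -/
def DirReach (G : Digraph' V E) : V → V → Prop :=
  Relation.ReflTransGen (fun a b => ∃ e, G.s e = a ∧ G.t e = b)

def StronglyConnected (G : Digraph' V E) : Prop := ∀ a b : V, DirReach G a b

/-- a step of a walk: an edge with a direction of traversal (`true` = forward) -/
def stepSource (G : Digraph' V E) (st : E × Bool) : V := if st.2 then G.s st.1 else G.t st.1
def stepTarget (G : Digraph' V E) (st : E × Bool) : V := if st.2 then G.t st.1 else G.s st.1

/-- `IsWalk G u l v` : `l` is a walk from `u` to `v` -/
def IsWalk (G : Digraph' V E) : V → List (E × Bool) → V → Prop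
  | u, [], w => u = w
  | u, st :: rest, w => stepSource G st = u ∧ IsWalk G (stepTarget G st) rest w

/-- a path: a walk with all vertices distinct -/
def IsPath (G : Digraph' V E) (u : V) (l : List (E × Bool)) (v : V) : Prop :=
  IsWalk G u l v ∧ (u :: l.map (stepTarget G)).Nodup

/-- a circuit at u: a nonempty closed walk with distinct vertices and distinct edges -/
def IsCircuit (G : Digraph' V E) (u : V) (l : List (E × Bool)) : Prop :=
  l ≠ [] ∧ IsWalk G u l u ∧ (l.map (stepTarget G)).Nodup ∧ (l.map Prod.fst).Nodup

/-- directed walk -/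
def IsDirWalk (G : Digraph' V E) : V → List E → V → Prop
  | u, [], w => u = w
  | u, e :: rest, w => G.s e = u ∧ IsDirWalk G (G.t e) rest w

def IsDirPath (G : Digraph' V E) (u : V) (l : List E) (v : V) : Prop :=
  IsDirWalk G u l v ∧ (u :: l.map G.t).Nodup

/-- directed circuit at u -/
def IsDirCircuit (G : Digraph' V E) (u : V) (l : List E) : Prop :=
  l ≠ [] ∧ IsDirWalk G u l u ∧ (l.map G.t).Nodup ∧ l.Nodup

/-- signed edge-sum λ(w) ∈ C₁ of a walk -/
noncomputable def lam (_G : Digraph' V E) (l : List (E × Bool)) : EuclideanSpace ℝ E :=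
  (l.map fun st => (if st.2 then (1:ℝ) else -1) • EuclideanSpace.single st.1 (1:ℝ)).sum

/-- edge-sum λ(p) of a directed walk -/
noncomputable def dirlam (_G : Digraph' V E) (l : List E) : EuclideanSpace ℝ E :=
  (l.map fun e => EuclideanSpace.single e (1:ℝ)).sum

/-- a graph-theoretical cycle: an integral 1-cycle with coefficients in {0, ±1} -/
def IsCycle (G : Digraph' V E) (γ : EuclideanSpace ℝ E) : Prop :=
  bd G γ = 0 ∧ ∀ j, γ j = 0 ∨ γ j = 1 ∨ γ j = -1

/-- an elementary cycle -/
def Elementary (G : Digraph' V E) (γ : EuclideanSpace ℝ E) : Prop :=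
  IsCycle G γ ∧ γ ≠ 0 ∧
    ¬ ∃ γ₁ γ₂, IsCycle G γ₁ ∧ IsCycle G γ₂ ∧ γ₁ ≠ 0 ∧ γ₂ ≠ 0 ∧
      (∀ j, γ₁ j = 0 ∨ γ₂ j = 0) ∧ γ = γ₁ + γ₂

noncomputable def plusSet (_G : Digraph' V E) (γ : EuclideanSpace ℝ E) : Finset E :=
  Finset.univ.filter fun j => γ j = 1

noncomputable def minusSet (_G : Digraph' V E) (γ : EuclideanSpace ℝ E) : Finset E :=
  Finset.univ.filter fun j => γ j = -1

end Digraph'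


set_option linter.unusedSectionVars false
set_option maxHeartbeats 1000000

namespace Digraph'
variable {V E : Type} [Fintype V] [Fintype E] [DecidableEq V] [DecidableEq E]

lemma bd_apply (G : Digraph' V E) (x : EuclideanSpace ℝ E) (v : V) :
    bd G x v = ∑ e, ((if G.s e = v then (1:ℝ) else 0) - (if G.t e = v then (1:ℝ) else 0)) * x e := by
  rfl

lemma bd_single (G : Digraph' V E) (j : E) (v : V) :
    bd G (EuclideanSpace.single j (1:ℝ)) v
      = (if G.s j = v then (1:ℝ) else 0) - (if G.t j = v then (1:ℝ) else 0) := by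
  rw [bd_apply]
  rw [Finset.sum_eq_single j]
  · simp
  · intro b _ hb; simp [EuclideanSpace.single_apply, hb]
  · simp

noncomputable def tailOf (G : Digraph' V E) (γ : EuclideanSpace ℝ E) (j : E) : V :=
  if γ j = 1 then G.s j else G.t j

noncomputable def headOf (G : Digraph' V E) (γ : EuclideanSpace ℝ E) (j : E) : V :=
  if γ j = 1 then G.t j else G.s j

noncomputable def outset (G : Digraph' V E) (γ : EuclideanSpace ℝ E) (v : V) : Finset E :=
  Finset.univ.filter fun j => γ j ≠ 0 ∧ tailOf G γ j = v

noncomputable def inset (G : Digraph' V E) (γ : EuclideanSpace ℝ E) (v : V) : Finset E :=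
  Finset.univ.filter fun j => γ j ≠ 0 ∧ headOf G γ j = v

lemma card_out_eq_in (G : Digraph' V E) (γ : EuclideanSpace ℝ E)
    (hcyc : bd G γ = 0) (hpm : ∀ j, γ j = 0 ∨ γ j = 1 ∨ γ j = -1) (v : V) :
    (outset G γ v).card = (inset G γ v).card := by
  have h0 : bd G γ v = 0 := by rw [hcyc]; rfl
  rw [bd_apply] at h0
  have key : ∀ j : E,
      ((if γ j ≠ 0 ∧ tailOf G γ j = v then (1:ℝ) else 0)
        - (if γ j ≠ 0 ∧ headOf G γ j = v then (1:ℝ) else 0))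
      = ((if G.s j = v then (1:ℝ) else 0) - (if G.t j = v then (1:ℝ) else 0)) * γ j := by
    intro j
    rcases hpm j with h | h | h <;>
      simp only [tailOf, headOf, h] <;> norm_num <;> split_ifs <;> simp_all <;> ring
  have hsum : ∑ j : E, ((if γ j ≠ 0 ∧ tailOf G γ j = v then (1:ℝ) else 0)
      - (if γ j ≠ 0 ∧ headOf G γ j = v then (1:ℝ) else 0)) = 0 := by
    rw [Finset.sum_congr rfl fun j _ => key j]; exact h0
  rw [Finset.sum_sub_distrib] at hsum
  have : ((outset G γ v).card : ℝ) = (inset G γ v).card := by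
    rw [outset, inset]
    rw [Finset.card_filter, Finset.card_filter]
    push_cast
    rw [sub_eq_zero] at hsum
    simpa using hsum
  exact_mod_cast this

end Digraph'
-- re-open
namespace Digraph'
variable {V E : Type} [Fintype V] [Fintype E] [DecidableEq V] [DecidableEq E]

section Walk
variable (G : Digraph' V E) (γ : EuclideanSpace ℝ E)

lemma out_nonempty (hcyc : bd G γ = 0) (hpm : ∀ j, γ j = 0 ∨ γ j = 1 ∨ γ j = -1)
    {v : V} (h : (inset G γ v).Nonempty) : (outset G γ v).Nonempty := by
  rw [← Finset.card_pos, card_out_eq_in G γ hcyc hpm, Finset.card_pos]; exact h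

noncomputable def step (j0 : E) (v : V) : E :=
  if h : (outset G γ v).Nonempty then h.choose else j0

noncomputable def wk (j0 : E) : ℕ → V
  | 0 => headOf G γ j0
  | n+1 => headOf G γ (step G γ j0 (wk j0 n))

lemma wk_spec (hcyc : bd G γ = 0) (hpm : ∀ j, γ j = 0 ∨ γ j = 1 ∨ γ j = -1)
    {j0 : E} (hj0 : γ j0 ≠ 0) (n : ℕ) :
    γ (step G γ j0 (wk G γ j0 n)) ≠ 0 ∧
    tailOf G γ (step G γ j0 (wk G γ j0 n)) = wk G γ j0 n := by
  have inmem : ∀ n, (inset G γ (wk G γ j0 n)).Nonempty := by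
    intro n
    induction n with
    | zero => exact ⟨j0, Finset.mem_filter.mpr ⟨Finset.mem_univ _, hj0, rfl⟩⟩
    | succ m ih =>
        have hout := out_nonempty G γ hcyc hpm ih
        have hstep : step G γ j0 (wk G γ j0 m) ∈ outset G γ (wk G γ j0 m) := by
          rw [step, dif_pos hout]; exact hout.choose_spec
        rw [outset, Finset.mem_filter] at hstep
        exact ⟨step G γ j0 (wk G γ j0 m), by
          simp only [inset, Finset.mem_filter, Finset.mem_univ, true_and]
          exact ⟨hstep.2.1, rfl⟩⟩
  have hout := out_nonempty G γ hcyc hpm (inmem n)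
  have hstep : step G γ j0 (wk G γ j0 n) ∈ outset G γ (wk G γ j0 n) := by
    rw [step, dif_pos hout]; exact hout.choose_spec
  rw [outset, Finset.mem_filter] at hstep
  exact ⟨hstep.2.1, hstep.2.2⟩

end Walk
end Digraph'

namespace Digraph'
variable {V E : Type} [Fintype V] [Fintype E] [DecidableEq V] [DecidableEq E]

lemma exists_index_ne_zero {γ : EuclideanSpace ℝ E} (hne : γ ≠ 0) : ∃ j, γ j ≠ 0 := by
  by_contra h
  push_neg at h
  exact hne (PiLp.ext h)

lemma exists_circuit (G : Digraph' V E) (γ : EuclideanSpace ℝ E)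
    (hcyc : bd G γ = 0) (hpm : ∀ j, γ j = 0 ∨ γ j = 1 ∨ γ j = -1) (hne : γ ≠ 0) :
    ∃ (m : ℕ) (v : Fin (m+1) → V) (e : Fin (m+1) → E),
      Function.Injective v ∧ Function.Injective e ∧
      ∀ i, γ (e i) ≠ 0 ∧ tailOf G γ (e i) = v i ∧ headOf G γ (e i) = v (i + 1) := by
  obtain ⟨j0, hj0⟩ := exists_index_ne_zero hne
  set w := wk G γ j0 with hw
  have hrep : ∃ b, ∃ a, a < b ∧ w a = w b := by
    obtain ⟨a, b, hab, heq⟩ := Finite.exists_ne_map_eq_of_infinite w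
    rcases lt_or_gt_of_ne hab with h | h
    · exact ⟨b, a, h, heq⟩
    · exact ⟨a, b, h, heq.symm⟩
  classical
  set b := Nat.find hrep with hb
  obtain ⟨a, hab, heq⟩ := Nat.find_spec hrep
  have hmin : ∀ k, k < b → ¬ ∃ a', a' < k ∧ w a' = w k := fun k hk => Nat.find_min hrep hk
  obtain ⟨m, hm⟩ : ∃ m, b = a + (m + 1) := ⟨b - a - 1, by omega⟩
  refine ⟨m, fun i => w (a + i.val), fun i => step G γ j0 (w (a + i.val)), ?_, ?_, ?_⟩
  · -- v injective
    intro i i' hii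
    by_contra hne'
    have hvne : i.val ≠ i'.val := fun h => hne' (Fin.ext h)
    rcases lt_or_gt_of_ne hvne with h | h
    · exact hmin (a + i'.val) (by omega) ⟨a + i.val, by omega, hii⟩
    · exact hmin (a + i.val) (by omega) ⟨a + i'.val, by omega, hii.symm⟩
  · -- e injective
    intro i i' hii
    have h1 := (wk_spec G γ hcyc hpm hj0 (a + i.val)).2
    have h2 := (wk_spec G γ hcyc hpm hj0 (a + i'.val)).2
    rw [← hw] at h1 h2
    have hii' : step G γ j0 (w (a + i.val)) = step G γ j0 (w (a + i'.val)) := hii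
    have : w (a + i.val) = w (a + i'.val) := by rw [← h1, hii', h2]
    -- reuse injectivity of v
    by_contra hne'
    have hvne : i.val ≠ i'.val := fun h => hne' (Fin.ext h)
    rcases lt_or_gt_of_ne hvne with h | h
    · exact hmin (a + i'.val) (by omega) ⟨a + i.val, by omega, this⟩
    · exact hmin (a + i.val) (by omega) ⟨a + i'.val, by omega, this.symm⟩
  · intro i
    obtain ⟨hne0, htail⟩ := wk_spec G γ hcyc hpm hj0 (a + i.val)
    rw [← hw] at htail
    refine ⟨hne0, htail, ?_⟩
    have hhead : headOf G γ (step G γ j0 (w (a + i.val))) = w (a + i.val + 1) := rfl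
    rw [hhead]
    show w (a + i.val + 1) = w (a + ((i + 1 : Fin (m+1)) : ℕ))
    by_cases hi : i.val < m
    · have h1 : ((i + 1 : Fin (m+1)) : ℕ) = i.val + 1 := by
        rw [Fin.val_add_one_of_lt]
        exact Fin.lt_def.mpr (by simpa using hi)
      rw [h1, Nat.add_assoc]
    · have him : i.val = m := by omega
      have hlast : i = Fin.last m := Fin.ext (by simpa using him)
      have h1 : ((i + 1 : Fin (m+1)) : ℕ) = 0 := by
        rw [hlast]; simp
      rw [h1]
      have h2 : a + i.val + 1 = b := by omega
      rw [h2, ← heq]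
      simp
end Digraph'

namespace Digraph'
variable {V E : Type} [Fintype V] [Fintype E] [DecidableEq V] [DecidableEq E]

lemma euclid_sum_apply {ι : Type*} (s : Finset ι) (f : ι → EuclideanSpace ℝ E) (j : E) :
    (∑ i ∈ s, f i) j = ∑ i ∈ s, f i j := by
  induction s using Finset.cons_induction with
  | empty => rfl
  | cons a s ha ih => rw [Finset.sum_cons, Finset.sum_cons, ← ih]; rfl

lemma elementary_circuit (G : Digraph' V E) (γ : EuclideanSpace ℝ E) (hγ : Elementary G γ) :
    ∃ (m : ℕ) (v : Fin (m+1) → V) (e : Fin (m+1) → E),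
      Function.Injective v ∧ Function.Injective e ∧
      (∀ i, γ (e i) ≠ 0 ∧ tailOf G γ (e i) = v i ∧ headOf G γ (e i) = v (i + 1)) ∧
      (∀ j, γ j ≠ 0 → ∃ i, e i = j) := by
  obtain ⟨⟨hcyc, hpm⟩, hne, hnd⟩ := hγ
  obtain ⟨m, v, e, hv, he, hedge⟩ := exists_circuit G γ hcyc hpm hne
  refine ⟨m, v, e, hv, he, hedge, ?_⟩
  set σ : EuclideanSpace ℝ E := ∑ i, γ (e i) • EuclideanSpace.single (e i) (1:ℝ) with hσ
  have hσapp : ∀ j, σ j = ∑ i, γ (e i) * (if j = e i then (1:ℝ) else 0) := by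
    intro j
    rw [hσ, euclid_sum_apply]
    refine Finset.sum_congr rfl fun i _ => ?_
    have : (γ (e i) • EuclideanSpace.single (e i) (1:ℝ)) j
        = γ (e i) * (EuclideanSpace.single (e i) (1:ℝ)) j := rfl
    rw [this, EuclideanSpace.single_apply]
  have hσe : ∀ i, σ (e i) = γ (e i) := by
    intro i
    rw [hσapp]
    rw [Finset.sum_eq_single i]
    · simp
    · intro b _ hb
      rw [if_neg fun h => hb (he h.symm)]
      ring
    · simp
  have hσ0 : ∀ j, (¬ ∃ i, e i = j) → σ j = 0 := by
    intro j hj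
    rw [hσapp]
    refine Finset.sum_eq_zero fun i _ => ?_
    rw [if_neg fun h => hj ⟨i, h.symm⟩]
    ring
  -- bd σ = 0
  have hbdσ : bd G σ = 0 := by
    have : bd G σ = ∑ i, γ (e i) • bd G (EuclideanSpace.single (e i) (1:ℝ)) := by
      rw [hσ, map_sum]
      exact Finset.sum_congr rfl fun i _ => by rw [map_smul]
    rw [this]
    ext v' : 1
    rw [euclid_sum_apply]
    have hterm : ∀ i, (γ (e i) • bd G (EuclideanSpace.single (e i) (1:ℝ))) v'
        = (if v i = v' then (1:ℝ) else 0) - (if v (i+1) = v' then (1:ℝ) else 0) := by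
      intro i
      have happ : (γ (e i) • bd G (EuclideanSpace.single (e i) (1:ℝ))) v'
          = γ (e i) * ((if G.s (e i) = v' then (1:ℝ) else 0) - (if G.t (e i) = v' then (1:ℝ) else 0)) := by
        rw [← bd_single G (e i) v']; rfl
      rw [happ]
      obtain ⟨hne0, htail, hhead⟩ := hedge i
      rcases hpm (e i) with h | h | h
      · exact absurd h hne0
      · rw [tailOf, if_pos h] at htail
        rw [headOf, if_pos h] at hhead
        rw [h, htail, hhead]; ring
      · have h1 : γ (e i) ≠ 1 := by rw [h]; norm_num
        rw [tailOf, if_neg h1] at htail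
        rw [headOf, if_neg h1] at hhead
        rw [h, htail, hhead]; ring
    rw [Finset.sum_congr rfl fun i _ => hterm i, Finset.sum_sub_distrib]
    have hre : ∑ i : Fin (m+1), (if v (i+1) = v' then (1:ℝ) else 0)
        = ∑ i : Fin (m+1), (if v i = v' then (1:ℝ) else 0) :=
      Fintype.sum_equiv (Equiv.addRight 1) _ _ fun i => rfl
    rw [hre, sub_self]
    rfl
  -- σ is a cycle, γ - σ is a cycle with disjoint support; elementariness forces γ = σ
  intro j hj
  by_contra hj'
  have hτ : γ - σ ≠ 0 := by
    intro h0
    have h1 : γ j - σ j = 0 := by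
      have : (γ - σ) j = γ j - σ j := rfl
      rw [← this, h0]; rfl
    rw [hσ0 j hj', sub_zero] at h1
    exact hj h1
  have hσpm : ∀ j', σ j' = 0 ∨ σ j' = 1 ∨ σ j' = -1 := by
    intro j'
    by_cases h : ∃ i, e i = j'
    · obtain ⟨i, rfl⟩ := h
      rw [hσe i]; exact hpm _
    · left; exact hσ0 j' h
  have hσne : σ ≠ 0 := by
    intro h0
    have h1 : σ (e 0) = 0 := by rw [h0]; rfl
    rw [hσe 0] at h1
    exact (hedge 0).1 h1
  have hτcyc : IsCycle G (γ - σ) := by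
    constructor
    · rw [map_sub, hcyc, hbdσ, sub_zero]
    · intro j'
      by_cases h : ∃ i, e i = j'
      · left
        obtain ⟨i, rfl⟩ := h
        have : (γ - σ) (e i) = γ (e i) - σ (e i) := rfl
        rw [this, hσe i, sub_self]
      · have : (γ - σ) j' = γ j' - σ j' := rfl
        rw [this, hσ0 j' h, sub_zero]
        exact hpm j'
  exact hnd ⟨σ, γ - σ, ⟨hbdσ, hσpm⟩, hτcyc, hσne, hτ, by
    intro j'
    by_cases h : ∃ i, e i = j'
    · right
      obtain ⟨i, rfl⟩ := h
      have : (γ - σ) (e i) = γ (e i) - σ (e i) := rfl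
      rw [this, hσe i, sub_self]
    · left; exact hσ0 j' h, by abel⟩
end Digraph'

namespace Digraph'
variable {V E : Type} [Fintype V] [Fintype E] [DecidableEq V] [DecidableEq E]

lemma mem_span_of_supp (G : Digraph' V E) (γ : EuclideanSpace ℝ E) (hγ : Elementary G γ)
    (x : EuclideanSpace ℝ E) (hx : bd G x = 0) (hsupp : ∀ j, γ j = 0 → x j = 0) :
    x ∈ Submodule.span ℝ {γ} := by
  obtain ⟨m, v, e, hv, he, hedge, hcover⟩ := elementary_circuit G γ hγ
  have hpm := hγ.1.2
  set f : Fin (m+1) → ℝ := fun i => γ (e i) * x (e i) with hf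
  -- the recurrence
  have hrec : ∀ i, f i = f (i - 1) := by
    intro i
    have h0 : bd G x (v i) = 0 := by rw [hx]; rfl
    rw [bd_apply] at h0
    have hzero : ∀ j ∈ Finset.univ, j ∉ Finset.univ.image e →
        ((if G.s j = v i then (1:ℝ) else 0) - (if G.t j = v i then (1:ℝ) else 0)) * x j = 0 := by
      intro j _ hj
      have hγj : γ j = 0 := by
        by_contra h
        obtain ⟨i', hi'⟩ := hcover j h
        exact hj (Finset.mem_image.mpr ⟨i', Finset.mem_univ _, hi'⟩)
      rw [hsupp j hγj, mul_zero]
    rw [← Finset.sum_subset (Finset.subset_univ (Finset.univ.image e)) hzero] at h0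
    rw [Finset.sum_image (fun a _ b _ h => he h)] at h0
    have hterm : ∀ i' : Fin (m+1),
        ((if G.s (e i') = v i then (1:ℝ) else 0) - (if G.t (e i') = v i then (1:ℝ) else 0)) * x (e i')
        = (if i' = i then f i' else 0) - (if i' = i - 1 then f i' else 0) := by
      intro i'
      obtain ⟨hne0, htail, hhead⟩ := hedge i'
      have hvv : ∀ i'' : Fin (m+1), (if v i'' = v i then (1:ℝ) else 0) = if i'' = i then 1 else 0 := by
        intro i''
        by_cases h : i'' = i
        · rw [if_pos h, if_pos (congrArg v h)]
        · rw [if_neg h, if_neg fun hh => h (hv hh)]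
      have hsw : ∀ r : ℝ, (if i' = i - 1 then r else 0) = (if i' + 1 = i then r else 0) := by
        intro r
        by_cases hc : i' + 1 = i
        · rw [if_pos hc, if_pos (by rw [eq_sub_iff_add_eq]; exact hc)]
        · rw [if_neg hc, if_neg fun hh => hc (eq_sub_iff_add_eq.mp hh)]
      have hfi' : f i' = γ (e i') * x (e i') := rfl
      rcases hpm (e i') with h | h | h
      · exact absurd h hne0
      · rw [tailOf, if_pos h] at htail
        rw [headOf, if_pos h] at hhead
        rw [htail, hhead, hvv i', hvv (i'+1), hsw (f i'), hfi', h, one_mul]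
        split_ifs <;> ring
      · have h1 : γ (e i') ≠ 1 := by rw [h]; norm_num
        rw [tailOf, if_neg h1] at htail
        rw [headOf, if_neg h1] at hhead
        rw [htail, hhead, hvv (i'+1), hvv i', hsw (f i'), hfi', h]
        split_ifs <;> ring
    rw [Finset.sum_congr rfl fun i' _ => hterm i', Finset.sum_sub_distrib] at h0
    rw [Finset.sum_ite_eq' Finset.univ i f, Finset.sum_ite_eq' Finset.univ (i-1) f] at h0
    simp only [Finset.mem_univ, if_true] at h0
    linarith
  have hrec' : ∀ i : Fin (m+1), f (i + 1) = f i := by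
    intro i
    have := hrec (i + 1)
    simpa using this
  open Fin.NatCast in
  have hconst : ∀ i : Fin (m+1), f i = f 0 := by
    have key : ∀ k : ℕ, f (k : Fin (m+1)) = f 0 := by
      intro k
      induction k with
      | zero => rfl
      | succ n ih =>
          have : ((n+1 : ℕ) : Fin (m+1)) = (n : Fin (m+1)) + 1 := by push_cast; ring
          rw [this, hrec', ih]
    intro i
    have := key i.val
    rwa [Fin.cast_val_eq_self] at this
  rw [Submodule.mem_span_singleton]
  refine ⟨f 0, PiLp.ext fun j => ?_⟩
  have happ : (f 0 • γ) j = f 0 * γ j := rfl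
  rw [happ]
  by_cases h : γ j = 0
  · rw [h, hsupp j h, mul_zero]
  · obtain ⟨i, rfl⟩ := hcover j h
    rw [← hconst i, hf]
    rcases hpm (e i) with h' | h' | h'
    · exact absurd h' h
    · simp [h']
    · simp [h']
end Digraph'

namespace Digraph'
variable {V E : Type} [Fintype V] [Fintype E] [DecidableEq V] [DecidableEq E]

lemma proj_mem (G : Digraph' V E) (x : EuclideanSpace ℝ E) :
    proj G x ∈ LinearMap.ker (bd G) := (Submodule.orthogonalProjection (LinearMap.ker (bd G)) x).2

lemma inner_proj_eq (G : Digraph' V E) (x y : EuclideanSpace ℝ E)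
    (hy : y ∈ LinearMap.ker (bd G)) : ⟪proj G x, y⟫ = ⟪x, y⟫ := by
  have h := Submodule.sub_starProjection_mem_orthogonal (K := LinearMap.ker (bd G)) x
  have h0 : ⟪x - proj G x, y⟫ = 0 :=
    (Submodule.mem_orthogonal' _ _).1 h y hy
  rw [inner_sub_left, sub_eq_zero] at h0
  exact h0.symm

end Digraph'

open Digraph' in
theorem stmt11 {V E : Type} [Fintype V] [Fintype E] [DecidableEq V] [DecidableEq E]
    (G : Digraph' V E) (hconn : Connected G)
    (γ : EuclideanSpace ℝ E) (hγ : Elementary G γ) :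
    Submodule.span ℝ {x : EuclideanSpace ℝ E |
        ∃ j, γ j = 0 ∧ x = proj G (EuclideanSpace.single j (1:ℝ))}
      = LinearMap.ker (bd G) ⊓ (Submodule.span ℝ {γ})ᗮ ∧
    Module.finrank ℝ
        (Submodule.span ℝ {x : EuclideanSpace ℝ E |
          ∃ j, γ j = 0 ∧ x = proj G (EuclideanSpace.single j (1:ℝ))}) + 1
      = Module.finrank ℝ (LinearMap.ker (bd G)) := by
  
  set H := LinearMap.ker (bd G) with hH
  set K := Submodule.span ℝ {γ} with hK
  set W := Submodule.span ℝ {x : EuclideanSpace ℝ E |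
          ∃ j, γ j = 0 ∧ x = proj G (EuclideanSpace.single j (1:ℝ))} with hW
  have hγH : γ ∈ H := LinearMap.mem_ker.mpr hγ.1.1
  have hγne : γ ≠ 0 := hγ.2.1
  have hWle : W ≤ H ⊓ Kᗮ := by
    rw [hW, Submodule.span_le]
    rintro x ⟨j, hj, rfl⟩
    refine Submodule.mem_inf.mpr ⟨proj_mem G _, ?_⟩
    rw [hK]
    refine Submodule.mem_orthogonal_singleton_iff_inner_right.mpr ?_
    rw [real_inner_comm, inner_proj_eq G _ γ hγH, EuclideanSpace.inner_single_left]
    simpa using hj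
  have heq : W = H ⊓ Kᗮ := by
    refine le_antisymm hWle fun u hu => ?_
    obtain ⟨w, hw, z, hz, rfl⟩ := W.exists_add_mem_mem_orthogonal u
    have hzH : z ∈ H := by
      have : z = (w + z) - w := by abel
      rw [this]
      exact Submodule.sub_mem H (Submodule.mem_inf.mp hu).1 ((hWle hw).1)
    have hzK : ⟪γ, z⟫ = 0 := by
      have hmem : z ∈ Kᗮ := by
        have : z = (w + z) - w := by abel
        rw [this]
        exact Submodule.sub_mem Kᗮ (Submodule.mem_inf.mp hu).2 ((hWle hw).2)
      rw [hK] at hmem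
      exact Submodule.mem_orthogonal_singleton_iff_inner_right.mp hmem
    have hsupp : ∀ j, γ j = 0 → z j = 0 := by
      intro j hj
      have h1 : ⟪EuclideanSpace.single j (1:ℝ), z⟫ = z j := by
        rw [EuclideanSpace.inner_single_left]; simp
      have h2 : ⟪proj G (EuclideanSpace.single j (1:ℝ)), z⟫
          = ⟪EuclideanSpace.single j (1:ℝ), z⟫ := inner_proj_eq G _ z hzH
      have h3 : ⟪proj G (EuclideanSpace.single j (1:ℝ)), z⟫ = 0 :=
        hz _ (Submodule.subset_span ⟨j, hj, rfl⟩)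
      rw [← h1, ← h2, h3]
    have hz0 : z ∈ Submodule.span ℝ {γ} :=
      mem_span_of_supp G γ hγ z (LinearMap.mem_ker.mp hzH) hsupp
    obtain ⟨c, rfl⟩ := Submodule.mem_span_singleton.mp hz0
    have hc : c = 0 := by
      rw [real_inner_smul_right] at hzK
      rcases mul_eq_zero.mp hzK with h | h
      · exact h
      · exact absurd (inner_self_eq_zero.mp h) hγne
    rw [hc, zero_smul, add_zero]
    exact hw
  refine ⟨heq, ?_⟩
  have hKle : K ≤ H := by
    rw [hK, Submodule.span_le, Set.singleton_subset_iff]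
    exact hγH
  have hsup : K ⊔ (H ⊓ Kᗮ) = H := by
    refine le_antisymm (sup_le hKle inf_le_left) fun h hh => ?_
    obtain ⟨y, hy, z, hz, rfl⟩ := K.exists_add_mem_mem_orthogonal h
    have hzH : z ∈ H := by
      have : z = (y + z) - y := by abel
      rw [this]
      exact Submodule.sub_mem H hh (hKle hy)
    exact Submodule.add_mem_sup hy (Submodule.mem_inf.mpr ⟨hzH, hz⟩)
  have hinf : K ⊓ (H ⊓ Kᗮ) = ⊥ := by
    rw [eq_bot_iff]
    intro x hx
    have : x ∈ K ⊓ Kᗮ := Submodule.mem_inf.mpr ⟨hx.1, hx.2.2⟩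
    rwa [Submodule.inf_orthogonal_eq_bot] at this
  have hfr := Submodule.finrank_sup_add_finrank_inf_eq K (H ⊓ Kᗮ)
  rw [hsup, hinf, finrank_bot, finrank_span_singleton hγne] at hfr
  rw [heq]
  omega
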